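/- Let U ∈ ℝ^{N×P} have full column rank, P_U = U(UᵀU)⁻¹Uᵀ, let A ∈ ℝ^{N×N} be symmetric and subspace-compatible with U, and set Ā = ½(I_N + A). Then the spectral radius of Ā − P_U satisfies ρ(Ā − P_U) ≤ ½ + ½·ρ(A − P_U) < 1. -/

import Mathlib

open Matrix

/-- Spectral radius of a real square matrix (largest modulus of a complex eigenvalue). -/
noncomputable def specRad {n : Type*} [Fintype n] [DecidableEq n]
    (X : Matrix n n ℝ) : ENNReal :=
  spectralRadius ℂ (X.map (algebraMap ℝ ℂ))

/-- The orthogonal projection matrix `P_U = U (UᵀU)⁻¹ Uᵀ` onto the range space of `U`. -/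
noncomputable def projMat {n p : Type*} [Fintype n] [Fintype p] [DecidableEq p]
    (U : Matrix n p ℝ) : Matrix n n ℝ :=
  U * (Uᵀ * U)⁻¹ * Uᵀ

/-- A matrix `A` is subspace-compatible with `U` if `A P_U = P_U`, `P_U A = P_U`, and
`ρ(P_U − A) < 1`. -/
def SubspaceCompatible {n p : Type*} [Fintype n] [DecidableEq n] [Fintype p] [DecidableEq p]
    (U : Matrix n p ℝ) (A : Matrix n n ℝ) : Prop :=
  A * projMat U = projMat U ∧ projMat U * A = projMat U ∧ specRad (projMat U - A) < 1

section Aux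

variable {n : Type*} [Fintype n] [DecidableEq n]

lemma aux_exists_eigen {X : Matrix n n ℂ} {μ : ℂ} (h : μ ∈ spectrum ℂ X) :
    ∃ v, v ≠ 0 ∧ X.mulVec v = μ • v := by
  rw [← AlgEquiv.spectrum_eq (Matrix.toLinAlgEquiv' (R := ℂ) (n := n)),
    ← Module.End.hasEigenvalue_iff_mem_spectrum] at h
  obtain ⟨v, hv⟩ := h.exists_hasEigenvector
  exact ⟨v, hv.2, hv.apply_eq_smul⟩

lemma aux_mem_spectrum {X : Matrix n n ℂ} {μ : ℂ} {v : n → ℂ}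
    (hv : v ≠ 0) (h : X.mulVec v = μ • v) : μ ∈ spectrum ℂ X := by
  rw [← AlgEquiv.spectrum_eq (Matrix.toLinAlgEquiv' (R := ℂ) (n := n)),
    ← Module.End.hasEigenvalue_iff_mem_spectrum]
  exact Module.End.hasEigenvalue_of_hasEigenvector ⟨Module.End.mem_eigenspace_iff.mpr h, hv⟩

lemma aux_specRad_neg (X : Matrix n n ℝ) : specRad (-X) = specRad X := by
  have hmap : (-X).map (algebraMap ℝ ℂ) = -(X.map (algebraMap ℝ ℂ)) := by
    ext i j; simp
  unfold specRad spectralRadius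
  rw [hmap, ← spectrum.neg_eq]
  apply le_antisymm
  · refine iSup₂_le fun k hk => ?_
    rw [Set.mem_neg] at hk
    have : (‖-k‖₊ : ENNReal) ≤ ⨆ k ∈ spectrum ℂ (X.map (algebraMap ℝ ℂ)), (‖k‖₊ : ENNReal) :=
      le_iSup₂ (f := fun k _ => (‖k‖₊ : ENNReal)) (-k) hk
    simpa using this
  · refine iSup₂_le fun k hk => ?_
    have hk' : -k ∈ -spectrum ℂ (X.map (algebraMap ℝ ℂ)) := by
      rw [Set.mem_neg, neg_neg]; exact hk
    have : (‖-k‖₊ : ENNReal) ≤ ⨆ k ∈ -spectrum ℂ (X.map (algebraMap ℝ ℂ)), (‖k‖₊ : ENNReal) :=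
      le_iSup₂ (f := fun k _ => (‖k‖₊ : ENNReal)) (-k) hk'
    simpa using this

end Aux

/-- With `U` of full column rank, `A` symmetric and subspace-compatible
with `U`, and `Ā = ½(I + A)`, the spectral radius satisfies
`ρ(Ā − P_U) ≤ ½ + ½ ρ(A − P_U) < 1`. -/
theorem specRad_Abar_sub_proj_le
    {N P : ℕ} (U : Matrix (Fin N) (Fin P) ℝ) (hU : U.rank = P)
    (A : Matrix (Fin N) (Fin N) ℝ) (hA : A.IsSymm) (hcomp : SubspaceCompatible U A) :
    specRad ((1 / 2 : ℝ) • ((1 : Matrix (Fin N) (Fin N) ℝ) + A) - projMat U)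
        ≤ 1 / 2 + (1 / 2) * specRad (A - projMat U) ∧
      (1 / 2 : ENNReal) + (1 / 2) * specRad (A - projMat U) < 1 := by
  -- idempotency of the projection
  have hrank : (Uᵀ * U).rank = P := by rw [Matrix.rank_transpose_mul_self, hU]
  have hunit : IsUnit (Uᵀ * U) := by
    rw [← Matrix.mulVec_surjective_iff_isUnit]
    have htop : LinearMap.range (Uᵀ * U).mulVecLin = ⊤ := by
      apply Submodule.eq_top_of_finrank_eq
      rw [← Matrix.rank, hrank]
      simp [Module.finrank_pi]
    intro y
    obtain ⟨x, hx⟩ := htop ▸ (Submodule.mem_top : y ∈ ⊤)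
    exact ⟨x, hx⟩
  have hinv : (Uᵀ * U)⁻¹ * (Uᵀ * U) = 1 :=
    Matrix.nonsing_inv_mul _ ((Matrix.isUnit_iff_isUnit_det _).mp hunit)
  have hPP : projMat U * projMat U = projMat U := by
    show U * (Uᵀ * U)⁻¹ * Uᵀ * (U * (Uᵀ * U)⁻¹ * Uᵀ) = U * (Uᵀ * U)⁻¹ * Uᵀ
    calc U * (Uᵀ * U)⁻¹ * Uᵀ * (U * (Uᵀ * U)⁻¹ * Uᵀ)
        = U * (((Uᵀ * U)⁻¹ * (Uᵀ * U)) * ((Uᵀ * U)⁻¹ * Uᵀ)) := by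
          simp only [Matrix.mul_assoc]
      _ = U * (Uᵀ * U)⁻¹ * Uᵀ := by rw [hinv, Matrix.one_mul, Matrix.mul_assoc]
  set Pm := projMat U with hPm
  set M : Matrix (Fin N) (Fin N) ℝ :=
    (1 / 2 : ℝ) • ((1 : Matrix (Fin N) (Fin N) ℝ) + A) - Pm with hM
  -- P * M = 0
  have hPM : Pm * M = 0 := by
    rw [hM, Matrix.mul_sub, Matrix.mul_smul, Matrix.mul_add, Matrix.mul_one,
      hcomp.2.1, hPP]
    rw [← two_smul ℝ Pm, smul_smul]
    norm_num
  -- complex versions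
  set f : ℝ →+* ℂ := (algebraMap ℝ ℂ) with hf
  set Mc := M.map f with hMc
  set Pc := Pm.map f with hPc
  set Ac := A.map f with hAc
  set Bc := (A - Pm).map f with hBc
  have hPMc : Pc * Mc = 0 := by
    rw [hPc, hMc, ← Matrix.map_mul, hPM]
    ext i j; simp
  have hMc_eq : Mc = (1 / 2 : ℂ) • ((1 : Matrix (Fin N) (Fin N) ℂ) + Ac) - Pc := by
    ext i j
    simp only [hMc, hM, Matrix.map_apply, Matrix.sub_apply, Matrix.smul_apply,
      Matrix.add_apply, Matrix.one_apply, hPc, hAc, smul_eq_mul]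
    by_cases h : i = j <;> simp [h, hf, Complex.ofReal_mul] <;> push_cast <;> ring
  have hBc_eq : Bc = Ac - Pc := by
    ext i j; simp [hBc, hAc, hPc]
  -- key eigenvalue bound
  have key : ∀ μ ∈ spectrum ℂ Mc,
      (‖μ‖₊ : ENNReal) ≤ 1 / 2 + (1 / 2) * specRad (A - Pm) := by
    intro μ hμ
    by_cases hμ0 : μ = 0
    · subst hμ0; simp
    obtain ⟨v, hv, hvm⟩ := aux_exists_eigen hμ
    have hPv : Pc.mulVec v = 0 := by
      have h1 : μ • Pc.mulVec v = 0 := by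
        calc μ • Pc.mulVec v = Pc.mulVec (μ • v) := by rw [Matrix.mulVec_smul]
          _ = Pc.mulVec (Mc.mulVec v) := by rw [hvm]
          _ = (Pc * Mc).mulVec v := by rw [Matrix.mulVec_mulVec]
          _ = 0 := by rw [hPMc, Matrix.zero_mulVec]
      exact (smul_eq_zero.mp h1).resolve_left hμ0
    have hAv : Ac.mulVec v = (2 * μ - 1) • v := by
      have h2 : (1 / 2 : ℂ) • (v + Ac.mulVec v) - Pc.mulVec v = μ • v := by
        rw [← hvm, hMc_eq]
        simp [Matrix.sub_mulVec, Matrix.smul_mulVec, Matrix.add_mulVec,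
          Matrix.one_mulVec]
      rw [hPv, sub_zero, smul_add] at h2
      have h3 : (1 / 2 : ℂ) • Ac.mulVec v = μ • v - (1 / 2 : ℂ) • v := by
        rw [← h2]; abel
      have := congrArg (fun w => (2 : ℂ) • w) h3
      simp only [smul_smul, smul_sub] at this
      norm_num at this
      rw [this, sub_smul, one_smul]
    have hBv : Bc.mulVec v = (2 * μ - 1) • v := by
      rw [hBc_eq, Matrix.sub_mulVec, hAv, hPv, sub_zero]
    have hmem : (2 * μ - 1) ∈ spectrum ℂ Bc := aux_mem_spectrum hv hBv
    have hle : (‖2 * μ - 1‖₊ : ENNReal) ≤ specRad (A - Pm) :=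
      le_iSup₂ (f := fun k _ => (‖k‖₊ : ENNReal)) (2 * μ - 1) hmem
    have hnorm : (‖μ‖₊ : ENNReal) ≤ 1 / 2 + (1 / 2) * (‖2 * μ - 1‖₊ : ENNReal) := by
      have h4 : ‖μ‖ ≤ 1 / 2 + (1 / 2) * ‖2 * μ - 1‖ := by
        have : μ = (1 / 2 : ℂ) * ((2 * μ - 1) + 1) := by ring
        calc ‖μ‖ = ‖(1 / 2 : ℂ) * ((2 * μ - 1) + 1)‖ := by rw [← this]
          _ = (1 / 2) * ‖(2 * μ - 1) + 1‖ := by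
              rw [norm_mul]; norm_num
          _ ≤ (1 / 2) * (‖2 * μ - 1‖ + 1) := by
              have := norm_add_le (2 * μ - 1) (1 : ℂ)
              simp only [norm_one] at this
              nlinarith
          _ = 1 / 2 + (1 / 2) * ‖2 * μ - 1‖ := by ring
      have h5 : ‖μ‖₊ ≤ 1 / 2 + (1 / 2) * ‖2 * μ - 1‖₊ := by
        rw [← NNReal.coe_le_coe]
        push_cast
        simpa using h4
      calc (‖μ‖₊ : ENNReal) ≤ ((1 / 2 + (1 / 2) * ‖2 * μ - 1‖₊ : NNReal) : ENNReal) := by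
            exact_mod_cast h5
        _ = 1 / 2 + (1 / 2) * (‖2 * μ - 1‖₊ : ENNReal) := by
            rw [ENNReal.coe_add, ENNReal.coe_mul]
            norm_num
    calc (‖μ‖₊ : ENNReal) ≤ 1 / 2 + (1 / 2) * (‖2 * μ - 1‖₊ : ENNReal) := hnorm
      _ ≤ 1 / 2 + (1 / 2) * specRad (A - Pm) := by
          gcongr
  constructor
  · exact iSup₂_le key
  · have hneg : specRad (A - Pm) = specRad (Pm - A) := by
      rw [← neg_sub Pm A, aux_specRad_neg]
    rw [hneg]
    have h1 : (1 / 2 : ENNReal) * specRad (Pm - A) < (1 / 2) * 1 := by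
      rw [ENNReal.mul_lt_mul_iff_right (by norm_num) (by norm_num)]
      exact hcomp.2.2
    calc (1 / 2 : ENNReal) + (1 / 2) * specRad (Pm - A)
        < 1 / 2 + (1 / 2) * 1 := by
          exact ENNReal.add_lt_add_left (by norm_num) h1
      _ = 1 := by
          rw [mul_one, ENNReal.add_halves]
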